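/- For each t ∈ (0,1), let φ_zz(ζ(t), t) denote the second complex derivative in z of z ↦ φ(z,t) evaluated at z = ζ(t). Then Re φ_zz(ζ(t), t) > 0 for all t ∈ (0,1); moreover Im φ_zz(ζ(t), t) ≤ 0 if t ∈ (0, 1/√2] and Im φ_zz(ζ(t), t) > 0 if t ∈ (1/√2, 1). -/

import Mathlib

open Complex Set

/-- `φ(z,t) = i t Log(1+z) - i t Log(1-z) - Log z`, with principal logarithms. -/
noncomputable def phiFn (t : ℝ) (z : ℂ) : ℂ :=
  Complex.I * (t : ℂ) * Complex.log (1 + z) - Complex.I * (t : ℂ) * Complex.log (1 - z) -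
    Complex.log z

/-- The saddle point `ζ(t) = -i t + √(1-t²)`. -/
noncomputable def zetaPt (t : ℝ) : ℂ :=
  -Complex.I * (t : ℂ) + (Real.sqrt (1 - t ^ 2) : ℂ)

lemma phi_hasDerivAt (t : ℝ) (z : ℂ) (hz : z.im < 0) :
    HasDerivAt (phiFn t)
      (Complex.I * t * (1 + z)⁻¹ + Complex.I * t * (1 - z)⁻¹ - z⁻¹) z := by
  have h1 : (1 + z) ∈ Complex.slitPlane := by
    refine Or.inr ?_
    simp only [Complex.add_im, Complex.one_im, zero_add]
    exact hz.ne
  have h2 : (1 - z) ∈ Complex.slitPlane := by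
    refine Or.inr ?_
    simp only [Complex.sub_im, Complex.one_im, zero_sub, ne_eq, neg_eq_zero]
    exact hz.ne
  have h3 : z ∈ Complex.slitPlane := Or.inr hz.ne
  have d1 : HasDerivAt (fun z : ℂ => Complex.log (1 + z)) ((1 + z)⁻¹) z := by
    exact ((Complex.hasDerivAt_log h1).comp z ((hasDerivAt_id z).const_add 1)).congr_deriv (by simp)
  have d2 : HasDerivAt (fun z : ℂ => Complex.log (1 - z)) (-(1 - z)⁻¹) z := by
    exact ((Complex.hasDerivAt_log h2).comp z ((hasDerivAt_id z).const_sub 1)).congr_deriv (by simp)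
  have d3 : HasDerivAt (fun z : ℂ => Complex.log z) (z⁻¹) z := Complex.hasDerivAt_log h3
  have := ((d1.const_mul (Complex.I * t)).sub (d2.const_mul (Complex.I * t))).sub d3
  refine this.congr_deriv ?_
  ring

lemma phi2_hasDerivAt (t : ℝ) (z : ℂ) (hz : z.im < 0) :
    HasDerivAt (fun z : ℂ => Complex.I * t * (1 + z)⁻¹ + Complex.I * t * (1 - z)⁻¹ - z⁻¹)
      (-(Complex.I * t) / (1 + z) ^ 2 + (Complex.I * t) / (1 - z) ^ 2 + 1 / z ^ 2) z := by
  have h1 : (1 + z) ≠ 0 := fun h => hz.ne (by simpa using (congrArg Complex.im h))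
  have h2 : (1 - z) ≠ 0 := by
    intro h
    have := congrArg Complex.im h
    simp only [Complex.sub_im, Complex.one_im, zero_sub, Complex.zero_im, neg_eq_zero] at this
    exact hz.ne this
  have h3 : z ≠ 0 := fun h => hz.ne (by simp [h])
  have d1 : HasDerivAt (fun z : ℂ => (1 + z)⁻¹) (-1 / (1 + z) ^ 2) z := by
    exact (((hasDerivAt_id z).const_add 1).inv h1).congr_deriv (by simp)
  have d2 : HasDerivAt (fun z : ℂ => (1 - z)⁻¹) (1 / (1 - z) ^ 2) z := by
    exact (((hasDerivAt_id z).const_sub 1).inv h2).congr_deriv (by simp)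
  have d3 : HasDerivAt (fun z : ℂ => z⁻¹) (-1 / z ^ 2) z := by
    exact ((hasDerivAt_id z).inv h3).congr_deriv (by simp)
  have := ((d1.const_mul (Complex.I * t)).add (d2.const_mul (Complex.I * t))).sub d3
  refine this.congr_deriv ?_
  ring

theorem phi_second_deriv_at_zetaPt (t : ℝ) (ht : t ∈ Ioo (0 : ℝ) 1) :
    0 < (iteratedDeriv 2 (phiFn t) (zetaPt t)).re ∧
    (t ≤ 1 / Real.sqrt 2 → (iteratedDeriv 2 (phiFn t) (zetaPt t)).im ≤ 0) ∧
    (1 / Real.sqrt 2 < t → 0 < (iteratedDeriv 2 (phiFn t) (zetaPt t)).im) := by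
  obtain ⟨ht0, ht1⟩ := ht
  set s : ℝ := Real.sqrt (1 - t ^ 2) with hs
  have hs2 : s ^ 2 = 1 - t ^ 2 := Real.sq_sqrt (by nlinarith)
  have hspos : 0 < s := Real.sqrt_pos.mpr (by nlinarith)
  have hζ : zetaPt t = (s : ℂ) - Complex.I * t := by rw [zetaPt]; ring
  have hζim : (zetaPt t).im < 0 := by
    rw [hζ]; simpa using ht0
  have hs2c : (s : ℂ) ^ 2 = 1 - (t : ℂ) ^ 2 := by
    have := congrArg (Complex.ofReal) hs2
    push_cast at this; exact this
  have htc : (t : ℂ) ≠ 0 := Complex.ofReal_ne_zero.mpr ht0.ne'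
  have hev : deriv (phiFn t) =ᶠ[nhds (zetaPt t)]
      (fun z : ℂ => Complex.I * t * (1 + z)⁻¹ + Complex.I * t * (1 - z)⁻¹ - z⁻¹) := by
    have hU : IsOpen {z : ℂ | z.im < 0} := isOpen_lt Complex.continuous_im continuous_const
    exact Filter.eventuallyEq_of_mem (hU.mem_nhds hζim)
      (fun z hz => (phi_hasDerivAt t z hz).deriv)
  have key : iteratedDeriv 2 (phiFn t) (zetaPt t) =
      -(Complex.I * t) / (1 + zetaPt t) ^ 2 + (Complex.I * t) / (1 - zetaPt t) ^ 2 +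
        1 / (zetaPt t) ^ 2 := by
    rw [show (2 : ℕ) = 1 + 1 from rfl, iteratedDeriv_succ, iteratedDeriv_one]
    rw [hev.deriv_eq]
    exact (phi2_hasDerivAt t (zetaPt t) hζim).deriv
  have h1' : (1 + ((s : ℂ) - Complex.I * t)) ≠ 0 := by
    intro h
    have := congrArg Complex.im h
    simp at this
    exact ht0.ne' this
  have h2' : (1 - ((s : ℂ) - Complex.I * t)) ≠ 0 := by
    intro h
    have := congrArg Complex.im h
    simp at this
    exact ht0.ne' this
  have h3' : ((s : ℂ) - Complex.I * t) ≠ 0 := by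
    intro h
    have := congrArg Complex.im h
    simp at this
    exact ht0.ne' this
  have hval : iteratedDeriv 2 (phiFn t) (zetaPt t) =
      Complex.ofReal (2 * (1 - t ^ 2)) + Complex.ofReal (s * (2 * t ^ 2 - 1) / t) * Complex.I := by
    rw [key, hζ]
    push_cast
    field_simp
    linear_combination ((-1) * (t:ℂ)^1 + (-5) * (t:ℂ)^3 + (-4) * (t:ℂ)^5 + (-2) * (t:ℂ)^7 + (-7) * (s:ℂ)^1 * Complex.I^1 * (t:ℂ)^2 + (-11) * (s:ℂ)^1 * Complex.I^1 * (t:ℂ)^4 + (-10) * (s:ℂ)^1 * Complex.I^1 * (t:ℂ)^6 + (1) * (s:ℂ)^2 * (t:ℂ)^1 + (8) * (s:ℂ)^2 * (t:ℂ)^3 + (20) * (s:ℂ)^2 * (t:ℂ)^5 + (-1) * (s:ℂ)^3 * Complex.I^1 + (-2) * (s:ℂ)^3 * Complex.I^1 * (t:ℂ)^2 + (20) * (s:ℂ)^3 * Complex.I^1 * (t:ℂ)^4 + (4) * (s:ℂ)^4 * (t:ℂ)^1 + (-10) * (s:ℂ)^4 * (t:ℂ)^3 + (1) * (s:ℂ)^5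 * Complex.I^1 + (-2) * (s:ℂ)^5 * Complex.I^1 * (t:ℂ)^2) * hs2c + ((-4) * (t:ℂ)^3 + (1) * (t:ℂ)^5 + (2) * (t:ℂ)^7 + (2) * (t:ℂ)^9 + (1) * Complex.I^2 * (t:ℂ)^5 + (-2) * Complex.I^2 * (t:ℂ)^7 + (-2) * Complex.I^2 * (t:ℂ)^9 + (-2) * Complex.I^4 * (t:ℂ)^7 + (2) * Complex.I^4 * (t:ℂ)^9 + (1) * (s:ℂ)^1 * Complex.I^1 * (t:ℂ)^2 + (-8) * (s:ℂ)^1 * Complex.I^1 * (t:ℂ)^4 + (1) * (s:ℂ)^1 * Complex.I^1 * (t:ℂ)^6 + (10) * (s:ℂ)^1 * Complex.I^1 * (t:ℂ)^8 + (-2) * (s:ℂ)^1 * Complex.I^3 * (t:ℂ)^4 + (15) * (s:ℂ)^1 * Complex.I^3 * (t:ℂ)^6 + (-10) * (s:ℂ)^1 * Complex.I^3 * (t:ℂ)^8 + (1) * (s:ℂ)^1 * Complex.I^5 * (t:ℂ)^6 + (-2) * (s:ℂ)^1 * Complex.I^5 * (t:ℂ)^8 + (-2) * (s:ℂ)^2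 * (t:ℂ)^1 + (14) * (s:ℂ)^2 * (t:ℂ)^3 + (16) * (s:ℂ)^2 * (t:ℂ)^5 + (-18) * (s:ℂ)^2 * (t:ℂ)^7 + (8) * (s:ℂ)^2 * Complex.I^2 * (t:ℂ)^3 + (-40) * (s:ℂ)^2 * Complex.I^2 * (t:ℂ)^5 + (18) * (s:ℂ)^2 * Complex.I^2 * (t:ℂ)^7 + (-6) * (s:ℂ)^2 * Complex.I^4 * (t:ℂ)^5 + (12) * (s:ℂ)^2 * Complex.I^4 * (t:ℂ)^7 + (-12) * (s:ℂ)^3 * Complex.I^1 * (t:ℂ)^2 + (49) * (s:ℂ)^3 * Complex.I^1 * (t:ℂ)^4 + (-10) * (s:ℂ)^3 * Complex.I^1 * (t:ℂ)^6 + (15) * (s:ℂ)^3 * Complex.I^3 * (t:ℂ)^4 + (-30) * (s:ℂ)^3 * Complex.I^3 * (t:ℂ)^6 + (8) * (s:ℂ)^4 * (t:ℂ)^1 + (-26) * (s:ℂ)^4 * (t:ℂ)^3 + (-10) * (s:ℂ)^4 * (t:ℂ)^5 + (-20) * (s:ℂ)^4 * Complex.I^2 * (t:ℂ)^3 + (40)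 * (s:ℂ)^4 * Complex.I^2 * (t:ℂ)^5 + (15) * (s:ℂ)^5 * Complex.I^1 * (t:ℂ)^2 + (-30) * (s:ℂ)^5 * Complex.I^1 * (t:ℂ)^4 + (-6) * (s:ℂ)^6 * (t:ℂ)^1 + (12) * (s:ℂ)^6 * (t:ℂ)^3) * Complex.I_sq
  have hre : (iteratedDeriv 2 (phiFn t) (zetaPt t)).re = 2 * (1 - t ^ 2) := by
    rw [hval, Complex.add_re, Complex.ofReal_re, Complex.mul_re, Complex.ofReal_re,
      Complex.ofReal_im, Complex.I_re, Complex.I_im]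
    ring
  have him : (iteratedDeriv 2 (phiFn t) (zetaPt t)).im = s * (2 * t ^ 2 - 1) / t := by
    rw [hval, Complex.add_im, Complex.ofReal_im, Complex.mul_im, Complex.ofReal_re,
      Complex.ofReal_im, Complex.I_re, Complex.I_im]
    ring
  have hsqrt2 : (Real.sqrt 2) ^ 2 = 2 := Real.sq_sqrt (by norm_num)
  have hsqrt2pos : 0 < Real.sqrt 2 := Real.sqrt_pos.mpr (by norm_num)
  have h12 : (1 / Real.sqrt 2) * Real.sqrt 2 = 1 := by
    field_simp
  refine ⟨by rw [hre]; nlinarith, ?_, ?_⟩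
  · intro h
    rw [him]
    have hu : t * Real.sqrt 2 ≤ 1 := by
      calc t * Real.sqrt 2 ≤ (1 / Real.sqrt 2) * Real.sqrt 2 :=
            mul_le_mul_of_nonneg_right h hsqrt2pos.le
        _ = 1 := h12
    have ht2 : 2 * t ^ 2 - 1 ≤ 0 := by
      nlinarith [mul_nonneg ht0.le hsqrt2pos.le]
    have : s * (2 * t ^ 2 - 1) ≤ 0 := mul_nonpos_of_nonneg_of_nonpos hspos.le ht2
    exact div_nonpos_of_nonpos_of_nonneg this ht0.le
  · intro h
    rw [him]
    have hu : 1 < t * Real.sqrt 2 := by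
      calc (1:ℝ) = (1 / Real.sqrt 2) * Real.sqrt 2 := h12.symm
        _ < t * Real.sqrt 2 := mul_lt_mul_of_pos_right h hsqrt2pos
    have ht2 : 0 < 2 * t ^ 2 - 1 := by
      nlinarith [mul_nonneg ht0.le hsqrt2pos.le]
    positivity
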